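/- Let r ≥ 0, let X be a finite quasimetric space, and let φ : X → X be a short map with φ ∼_r id_X. Then there exists a natural number n ≥ 1 such that φⁿ∘φⁿ = φⁿ, and for any such n the image φⁿ(X), with the induced quasimetric, is an r-deformation retract of X. -/

import Mathlib

open scoped ENNReal

class QuasiMetric (X : Type*) where
  qdist : X → X → ℝ≥0∞
  qdist_triangle : ∀ x y z : X, qdist x z ≤ qdist x y + qdist y z
  qdist_eq_zero_iff : ∀ x y : X, qdist x y = 0 ↔ x = y

open QuasiMetric

instance {X : Type*} [QuasiMetric X] (A : Set X) : QuasiMetric A where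
  qdist a b := qdist a.1 b.1
  qdist_triangle a b c := qdist_triangle a.1 b.1 c.1
  qdist_eq_zero_iff a b := (qdist_eq_zero_iff a.1 b.1).trans Subtype.coe_inj

/-- A map of quasimetric spaces is short (1-Lipschitz). -/
def IsShort {X Y : Type*} [QuasiMetric X] [QuasiMetric Y] (f : X → Y) : Prop :=
  ∀ x x' : X, qdist (f x) (f x') ≤ qdist x x'

/-- The distance `d(f,g) = sup_x d(f x, g x)` on maps. -/
noncomputable def mapDist {X Y : Type*} [QuasiMetric X] [QuasiMetric Y] (f g : X → Y) : ℝ≥0∞ :=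
  ⨆ x : X, qdist (f x) (g x)

/-- Two short maps are `r`-homotopic if they are connected by a chain of short maps
in which each consecutive pair is at distance `≤ r` in one direction or the other. -/
def MapHomotopic {X Y : Type*} [QuasiMetric X] [QuasiMetric Y] (r : ℝ) (f g : X → Y) : Prop :=
  Relation.ReflTransGen
    (fun u v : X → Y => IsShort u ∧ IsShort v ∧
      (mapDist u v ≤ ENNReal.ofReal r ∨ mapDist v u ≤ ENNReal.ofReal r)) f g

/-- `A ⊆ X` is an `r`-deformation retract of `X`. -/
def IsDefRetract {X : Type*} [QuasiMetric X] (r : ℝ) (A : Set X) : Prop :=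
  ∃ ρ : X → A, IsShort ρ ∧ (∀ a : A, ρ (a : X) = a) ∧
    MapHomotopic r (fun x => (ρ x : X)) id

/-- A quasimetric space is `r`-minimal if it has no proper `r`-deformation retract. -/
def RMinimal (r : ℝ) (X : Type*) [QuasiMetric X] : Prop :=
  ∀ A : Set X, IsDefRetract r A → A = Set.univ

/-- A distance-preserving bijection. -/
def IsIsometry {X Y : Type*} [QuasiMetric X] [QuasiMetric Y] (f : X → Y) : Prop :=
  Function.Bijective f ∧ ∀ x x' : X, qdist (f x) (f x') = qdist x x'

/-- Two quasimetric spaces are `r`-homotopy equivalent. -/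
def RHomotopyEquivalent (r : ℝ) (X Y : Type*) [QuasiMetric X] [QuasiMetric Y] : Prop :=
  ∃ f : X → Y, ∃ g : Y → X, IsShort f ∧ IsShort g ∧
    MapHomotopic r (g ∘ f) id ∧ MapHomotopic r (f ∘ g) id

lemma isShort_comp {X : Type*} [QuasiMetric X] {f g : X → X}
    (hf : IsShort f) (hg : IsShort g) : IsShort (f ∘ g) :=
  fun x x' => le_trans (hf _ _) (hg x x')

lemma isShort_iterate {X : Type*} [QuasiMetric X] {f : X → X} (hf : IsShort f) :
    ∀ n, IsShort f^[n] := by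
  intro n
  induction n with
  | zero => exact fun x x' => le_of_eq rfl
  | succ n ih => rw [Function.iterate_succ]; exact isShort_comp ih hf

lemma mapHomotopic_comp_left {X : Type*} [QuasiMetric X] {r : ℝ} {u v f : X → X}
    (hf : IsShort f) (huv : MapHomotopic r u v) : MapHomotopic r (f ∘ u) (f ∘ v) := by
  refine Relation.ReflTransGen.lift (fun w => f ∘ w) ?_ _ _ huv
  rintro a b ⟨ha, hb, hab⟩
  refine ⟨isShort_comp hf ha, isShort_comp hf hb, ?_⟩
  have key : ∀ p q : X → X, mapDist p q ≤ ENNReal.ofReal r →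
      mapDist (f ∘ p) (f ∘ q) ≤ ENNReal.ofReal r := by
    intro p q hpq
    refine le_trans ?_ hpq
    exact iSup_mono fun x => hf _ _
  rcases hab with hab | hab
  · exact Or.inl (key _ _ hab)
  · exact Or.inr (key _ _ hab)

lemma mapHomotopic_iterate {X : Type*} [QuasiMetric X] {r : ℝ} {φ : X → X}
    (hφ : IsShort φ) (h : MapHomotopic r φ id) :
    ∀ n, MapHomotopic r φ^[n] id := by
  intro n
  induction n with
  | zero => exact Relation.ReflTransGen.refl
  | succ n ih =>
    have h1 : MapHomotopic r (φ^[n] ∘ φ) (φ^[n] ∘ id) :=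
      mapHomotopic_comp_left (isShort_iterate hφ n) h
    rw [Function.iterate_succ]
    exact Relation.ReflTransGen.trans h1 ih

lemma exists_idem_iterate {X : Type*} [Finite X] (φ : X → X) :
    ∃ n : ℕ, 1 ≤ n ∧ φ^[n] ∘ φ^[n] = φ^[n] := by
  obtain ⟨a, b, hab, heq⟩ := Finite.exists_ne_map_eq_of_infinite (fun n : ℕ => φ^[n])
  wlog hlt : a < b generalizing a b
  · exact this b a hab.symm heq.symm (by omega)
  have heq' : φ^[a] = φ^[b] := heq
  obtain ⟨p, hb⟩ : ∃ p, b = a + p := ⟨b - a, by omega⟩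
  have hp1 : 1 ≤ p := by omega
  have hstep : ∀ t, φ^[b + t] = φ^[a + t] := by
    intro t
    rw [Function.iterate_add, Function.iterate_add, heq']
  have hmul : ∀ k t, φ^[a + t + k * p] = φ^[a + t] := by
    intro k
    induction k with
    | zero => simp
    | succ k ih =>
      intro t
      have h1 : a + t + (k + 1) * p = b + (t + k * p) := by rw [hb]; ring
      have h2 : b + (t + k * p) = a + (t + k * p) → True := fun _ => trivial
      rw [h1, hstep (t + k * p), ← Nat.add_assoc, ih t]
  have hn1 : 1 ≤ (a + 1) * p := Nat.mul_pos (Nat.succ_pos a) hp1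
  refine ⟨(a + 1) * p, hn1, ?_⟩
  rw [← Function.iterate_add]
  obtain ⟨t, ht⟩ : ∃ t, (a + 1) * p = a + t := ⟨(a + 1) * p - a, by have := Nat.le_mul_of_pos_right (a + 1) hp1; omega⟩
  have : (a + 1) * p + (a + 1) * p = a + t + (a + 1) * p := by rw [← ht]
  rw [this, hmul (a + 1) t, ht]

theorem stmt_1 {X : Type*} [QuasiMetric X] [Finite X] (r : ℝ) (hr : 0 ≤ r)
    (φ : X → X) (hφ : IsShort φ) (h : MapHomotopic r φ id) :
    (∃ n : ℕ, 1 ≤ n ∧ φ^[n] ∘ φ^[n] = φ^[n]) ∧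
      ∀ n : ℕ, 1 ≤ n → φ^[n] ∘ φ^[n] = φ^[n] → IsDefRetract r (Set.range φ^[n]) := by
  refine ⟨exists_idem_iterate φ, ?_⟩
  intro n _ hidem
  refine ⟨fun x => ⟨φ^[n] x, Set.mem_range_self x⟩, ?_, ?_, ?_⟩
  · intro x x'
    exact isShort_iterate hφ n x x'
  · rintro ⟨a, x, hx⟩
    apply Subtype.ext
    show φ^[n] a = a
    rw [← hx]
    exact congrFun hidem x
  · show MapHomotopic r φ^[n] id
    exact mapHomotopic_iterate hφ h n
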